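/- Let z_r' = d/dz E_α^{−r}(z). For any compact [α₋,α₊] ⊂ (0,1) there is a constant C such that |(∂_α z_r')/z_r'| ≤ C·(max(1,log(r z^α)))²·(max(1,log r) − log z) for all α ∈ [α₋,α₊], z ∈ (0,1], r ≥ 1. -/

import Mathlib

open Real Set Topology Classical Filter

/-- Left branch of the LSV (Pomeau–Manneville type) map. -/
noncomputable def Ea (α x : ℝ) : ℝ := x * (1 + 2 ^ α * x ^ α)

noncomputable def phi (a t : ℝ) : ℝ := t * (1 + Real.exp (a * Real.log (2*t)))
noncomputable def phx (a t : ℝ) : ℝ := 1 + (1+a) * Real.exp (a * Real.log (2*t))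
noncomputable def pha (a t : ℝ) : ℝ := t * Real.exp (a * Real.log (2*t)) * Real.log (2*t)

lemma hasStrictFDerivAt_phi (a t : ℝ) (ht : 0 < t) :
    HasStrictFDerivAt (fun p : ℝ × ℝ => phi p.1 p.2)
      (pha a t • ContinuousLinearMap.fst ℝ ℝ ℝ + phx a t • ContinuousLinearMap.snd ℝ ℝ ℝ) (a, t) := by
  have h2t : HasStrictFDerivAt (fun p : ℝ × ℝ => 2 * p.2)
      ((2:ℝ) • ContinuousLinearMap.snd ℝ ℝ ℝ) (a, t) :=
    (hasStrictFDerivAt_snd (𝕜 := ℝ) (E := ℝ) (F := ℝ)).const_mul 2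
  have hl : HasStrictFDerivAt (fun p : ℝ × ℝ => Real.log (2 * p.2))
      ((1/t) • ContinuousLinearMap.snd ℝ ℝ ℝ) (a, t) := by
    have hlog := (Real.hasStrictDerivAt_log (by positivity : (2:ℝ)*t ≠ 0)).comp_hasStrictFDerivAt (a, t) h2t
    refine hlog.congr_fderiv ?_
    ext p
    simp
    field_simp
    simp [smul_smul]
  have hmul : HasStrictFDerivAt (fun p : ℝ × ℝ => p.1 * Real.log (2 * p.2))
      (Real.log (2*t) • ContinuousLinearMap.fst ℝ ℝ ℝ + (a/t) • ContinuousLinearMap.snd ℝ ℝ ℝ) (a, t) := by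
    have := (hasStrictFDerivAt_fst (𝕜 := ℝ) (E := ℝ) (F := ℝ)).mul hl
    refine this.congr_fderiv ?_
    ext p
    · simp
    · simp; ring
  have hexp := (Real.hasStrictDerivAt_exp (a * Real.log (2*t))).comp_hasStrictFDerivAt (a, t) hmul
  have hall := (hasStrictFDerivAt_snd (𝕜 := ℝ) (E := ℝ) (F := ℝ)).mul (hexp.const_add 1)
  have : (fun p : ℝ × ℝ => phi p.1 p.2) = fun p : ℝ × ℝ => p.2 * (1 + Real.exp (p.1 * Real.log (2 * p.2))) := by
    funext p; rw [phi]
  rw [this]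
  refine hall.congr_fderiv ?_
  ext p
  · simp [pha, phx]; ring
  · simp [pha, phx]; field_simp; ring


noncomputable def mkEquiv (p q : ℝ) (hq : q ≠ 0) : (ℝ × ℝ) ≃L[ℝ] (ℝ × ℝ) :=
  LinearEquiv.toContinuousLinearEquiv <| LinearEquiv.ofLinear
    ((LinearMap.fst ℝ ℝ ℝ).prod (p • LinearMap.fst ℝ ℝ ℝ + q • LinearMap.snd ℝ ℝ ℝ))
    ((LinearMap.fst ℝ ℝ ℝ).prod (q⁻¹ • (LinearMap.snd ℝ ℝ ℝ - p • LinearMap.fst ℝ ℝ ℝ)))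
    (by refine LinearMap.ext fun x => ?_; obtain ⟨u, v⟩ := x
        simp [LinearMap.prod_apply]; field_simp; ring)
    (by refine LinearMap.ext fun x => ?_; obtain ⟨u, v⟩ := x
        simp [LinearMap.prod_apply]; field_simp)

lemma mkEquiv_apply (p q : ℝ) (hq : q ≠ 0) (x : ℝ × ℝ) :
    mkEquiv p q hq x = (x.1, p * x.1 + q * x.2) := by
  simp [mkEquiv, LinearEquiv.toContinuousLinearEquiv, LinearEquiv.ofLinear]

lemma mkEquiv_symm_apply (p q : ℝ) (hq : q ≠ 0) (x : ℝ × ℝ) :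
    (mkEquiv p q hq).symm x = (x.1, q⁻¹ * (x.2 - p * x.1)) := by
  simp [mkEquiv, LinearEquiv.toContinuousLinearEquiv, LinearEquiv.ofLinear]
  rfl


lemma phi_pos (a t : ℝ) (ht : 0 < t) : 0 < phi a t := by
  have := Real.exp_pos (a * Real.log (2*t)); unfold phi; nlinarith

lemma phi_strictMonoOn (a : ℝ) (ha : 0 < a) : StrictMonoOn (phi a) (Ioi 0) := by
  intro s hs t ht hst
  have h1 : Real.exp (a * Real.log (2*s)) < Real.exp (a * Real.log (2*t)) := by
    apply Real.exp_lt_exp.2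
    have := Real.log_lt_log (by linarith [mem_Ioi.1 hs]) (by linarith : 2*s < 2*t)
    nlinarith
  have hs' : (0:ℝ) < s := hs
  have : 0 < Real.exp (a * Real.log (2*s)) := Real.exp_pos _
  unfold phi
  nlinarith [Real.exp_pos (a * Real.log (2*t))]

lemma continuousOn_phi (a : ℝ) : ContinuousOn (phi a) (Ioi 0) := by
  apply ContinuousOn.mul continuousOn_id
  apply ContinuousOn.add continuousOn_const
  apply ContinuousOn.rexp
  apply ContinuousOn.mul continuousOn_const
  apply ContinuousOn.log (by fun_prop)
  intro t ht; exact ne_of_gt (by linarith [mem_Ioi.1 ht])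

lemma exists_phi_root (a y : ℝ) (ha : 0 < a) (hy : 0 < y) : ∃ t, 0 < t ∧ phi a t = y := by
  set t₀ := min (y/2) (1/4) with ht₀def
  have ht₀ : 0 < t₀ := lt_min (by linarith) (by norm_num)
  have ht₀le : t₀ ≤ 1/4 := min_le_right _ _
  have h1 : phi a t₀ ≤ y := by
    have hlog : Real.log (2*t₀) ≤ 0 := Real.log_nonpos (by linarith) (by linarith)
    have : Real.exp (a * Real.log (2*t₀)) ≤ 1 := Real.exp_le_one_iff.2 (by nlinarith)
    have h2 : phi a t₀ ≤ 2 * t₀ := by unfold phi; nlinarith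
    have : t₀ ≤ y/2 := min_le_left _ _
    linarith
  set m := max y 1 with hm
  have hym : y ≤ m := le_max_left _ _
  have h2 : y ≤ phi a m := by
    have hm1 : (1:ℝ) ≤ m := le_max_right _ _
    have : (0:ℝ) ≤ a * Real.log (2*m) := by
      have := Real.log_nonneg (by linarith : (1:ℝ) ≤ 2*m); positivity
    have := Real.one_le_exp this
    unfold phi; nlinarith
  have ht₀m : t₀ ≤ m := le_trans ht₀le (by linarith [le_max_right y 1])
  obtain ⟨t, ht, hphit⟩ := intermediate_value_Icc ht₀m ((continuousOn_phi a).mono (fun s hs => lt_of_lt_of_le ht₀ hs.1)) ⟨h1, h2⟩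
  exact ⟨t, lt_of_lt_of_le ht₀ ht.1, hphit⟩

lemma phi_eq_Ea (a t : ℝ) (ht : 0 < t) : Ea a t = phi a t := by
  rw [Ea, phi, Real.rpow_def_of_pos (by norm_num : (0:ℝ) < 2), Real.rpow_def_of_pos ht,
    ← Real.exp_add, Real.log_mul (by norm_num) ht.ne']
  ring_nf

lemma phx_pos (a t : ℝ) (ha : 0 ≤ a) : 0 < phx a t := by
  have := Real.exp_pos (a * Real.log (2*t)); unfold phx; nlinarith

noncomputable def ginv (a y : ℝ) : ℝ :=
  if h : ∃ t, 0 < t ∧ phi a t = y then h.choose else 1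

lemma ginv_spec {a y : ℝ} (ha : 0 < a) (hy : 0 < y) :
    0 < ginv a y ∧ phi a (ginv a y) = y := by
  have h := exists_phi_root a y ha hy
  rw [ginv, dif_pos h]
  exact h.choose_spec

lemma ginv_eq {a t : ℝ} (ha : 0 < a) (ht : 0 < t) : ginv a (phi a t) = t := by
  obtain ⟨h1, h2⟩ := ginv_spec ha (phi_pos a t ht)
  exact (phi_strictMonoOn a ha).injOn (mem_Ioi.2 h1) (mem_Ioi.2 ht) h2

lemma hasStrictFDerivAt_ginv_pair {a t : ℝ} (ha : a ∈ Ioo (0:ℝ) 1) (ht : 0 < t) :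
    HasStrictFDerivAt (fun p : ℝ × ℝ => (p.1, ginv p.1 p.2))
      ((mkEquiv (pha a t) (phx a t) (phx_pos a t ha.1.le).ne').symm :
        (ℝ × ℝ) →L[ℝ] (ℝ × ℝ)) (a, phi a t) := by
  set M := mkEquiv (pha a t) (phx a t) (phx_pos a t ha.1.le).ne' with hM
  have hG : HasStrictFDerivAt (fun p : ℝ × ℝ => (p.1, phi p.1 p.2)) (M : (ℝ×ℝ) →L[ℝ] (ℝ×ℝ)) (a, t) := by
    have := (hasStrictFDerivAt_fst (𝕜 := ℝ) (E := ℝ) (F := ℝ)).prodMk (hasStrictFDerivAt_phi a t ht)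
    refine this.congr_fderiv ?_
    all_goals
      refine ContinuousLinearMap.ext fun p => ?_
      simp only [hM, ContinuousLinearEquiv.coe_coe, mkEquiv_apply]
      try simp
  have key := hG.to_localInverse
  set inv := hG.localInverse _ _ _ with hinv
  have heq : (fun p : ℝ × ℝ => (p.1, ginv p.1 p.2)) =ᶠ[𝓝 ((a : ℝ), phi a t)] inv := by
    have h1 : ∀ᶠ p in 𝓝 ((a:ℝ), phi a t), (fun q : ℝ×ℝ => (q.1, phi q.1 q.2)) (inv p) = p := by
      have := hG.eventually_right_inverse
      simpa using this
    have h2 : ∀ᶠ p in 𝓝 ((a:ℝ), phi a t), 0 < (inv p).2 := by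
      have hc : ContinuousAt inv ((a:ℝ), phi a t) := by
        simpa using hG.localInverse_continuousAt
      have hmem : inv ((a:ℝ), phi a t) ∈ {q : ℝ × ℝ | 0 < q.2} := by
        have := hG.localInverse_apply_image
        simp only [hinv] at *
        rw [this]  -- inv (G (a,t)) = (a,t)
        exact ht
      exact hc.eventually_mem ((isOpen_lt continuous_const continuous_snd).mem_nhds hmem)
    have h3 : ∀ᶠ p in 𝓝 ((a:ℝ), phi a t), p.1 ∈ Ioo (0:ℝ) 1 := by
      have : IsOpen {p : ℝ × ℝ | p.1 ∈ Ioo (0:ℝ) 1} := isOpen_Ioo.preimage continuous_fst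
      exact this.mem_nhds (by simpa using ha)
    filter_upwards [h1, h2, h3] with p hp1 hp2 hp3
    have e1 : (inv p).1 = p.1 := (Prod.ext_iff.1 hp1).1
    have e2 : phi (inv p).1 (inv p).2 = p.2 := (Prod.ext_iff.1 hp1).2
    rw [e1] at e2
    have h4 : ginv p.1 p.2 = (inv p).2 := by
      rw [← e2]; exact ginv_eq hp3.1 hp2
    exact Prod.ext e1.symm h4
  exact key.congr_of_eventuallyEq heq.symm

lemma hasDerivAt_ginv_curve {a t : ℝ} (ha : a ∈ Ioo (0:ℝ) 1) (ht : 0 < t)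
    {γ : ℝ → ℝ × ℝ} {d : ℝ × ℝ} {s : ℝ} (hγ : HasDerivAt γ d s) (hγs : γ s = (a, phi a t)) :
    HasDerivAt (fun s => ginv (γ s).1 (γ s).2) ((d.2 - pha a t * d.1) / phx a t) s := by
  have hpair := (hasStrictFDerivAt_ginv_pair ha ht).hasFDerivAt
  have hsnd := (ContinuousLinearMap.snd ℝ ℝ ℝ).hasFDerivAt.comp _ hpair
  rw [← hγs] at hsnd
  have := hsnd.comp_hasDerivAt s hγ
  refine this.congr_deriv ?_
  simp [ContinuousLinearMap.comp_apply, mkEquiv_symm_apply]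
  field_simp

noncomputable def W : ℕ → ℝ → ℝ → ℝ
  | 0 => fun _ x => x
  | (r+1) => fun a x => ginv a (W r a x)

lemma W_pos {a x : ℝ} (ha : 0 < a) (hx : 0 < x) : ∀ r, 0 < W r a x
  | 0 => hx
  | (r+1) => (ginv_spec ha (W_pos ha hx r)).1

lemma phi_W {a x : ℝ} (ha : 0 < a) (hx : 0 < x) (r : ℕ) :
    phi a (W (r+1) a x) = W r a x := (ginv_spec ha (W_pos ha hx r)).2

noncomputable def Br (a x : ℝ) : ℕ → ℝ
  | 0 => 1
  | (r+1) => Br a x r / phx a (W (r+1) a x)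

noncomputable def Ar (a x : ℝ) : ℕ → ℝ
  | 0 => 0
  | (r+1) => (Ar a x r - pha a (W (r+1) a x)) / phx a (W (r+1) a x)

lemma hasDerivAt_W_x {a x : ℝ} (ha : a ∈ Ioo (0:ℝ) 1) (hx : 0 < x) :
    ∀ r, HasDerivAt (fun x' => W r a x') (Br a x r) x := by
  intro r
  induction r with
  | zero => simpa [W, Br] using hasDerivAt_id' x
  | succ r ih =>
    have hcurve : HasDerivAt (fun x' => ((a : ℝ), W r a x')) ((0 : ℝ), Br a x r) x :=
      (hasDerivAt_const x a).prodMk ih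
    have h := hasDerivAt_ginv_curve ha (W_pos ha.1 hx (r+1)) hcurve
      (by rw [phi_W ha.1 hx r])
    have hfun : (fun s => ginv ((a : ℝ), W r a s).1 ((a : ℝ), W r a s).2)
        = fun x' => W (r+1) a x' := rfl
    rw [hfun] at h
    convert h using 1
    simp only [Br]
    simp

lemma hasDerivAt_W_a {a x : ℝ} (ha : a ∈ Ioo (0:ℝ) 1) (hx : 0 < x) :
    ∀ r, HasDerivAt (fun a' => W r a' x) (Ar a x r) a := by
  intro r
  induction r with
  | zero => simpa [W, Ar] using hasDerivAt_const a x
  | succ r ih =>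
    have hcurve : HasDerivAt (fun a' => (a', W r a' x)) ((1 : ℝ), Ar a x r) a :=
      (hasDerivAt_id a).prodMk ih
    have h := hasDerivAt_ginv_curve ha (W_pos ha.1 hx (r+1)) hcurve
      (by rw [phi_W ha.1 hx r])
    have hfun : (fun s => ginv ((s : ℝ), W r s x).1 ((s : ℝ), W r s x).2)
        = fun a' => W (r+1) a' x := rfl
    rw [hfun] at h
    convert h using 1
    simp only [Ar]
    simp

lemma phi_half (a : ℝ) : phi a (1/2) = 1 := by
  rw [phi]; norm_num

lemma ginv_le_half {a y : ℝ} (ha : 0 < a) (hy : 0 < y) (hy1 : y ≤ 1) : ginv a y ≤ 1/2 := by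
  obtain ⟨h1, h2⟩ := ginv_spec ha hy
  by_contra h
  push_neg at h
  have := phi_strictMonoOn a ha (mem_Ioi.2 (by norm_num : (0:ℝ) < 1/2)) (mem_Ioi.2 h1) h
  rw [phi_half, h2] at this
  linarith

lemma W_le_one {a x : ℝ} (ha : 0 < a) (hx : 0 < x) (hx1 : x ≤ 1) : ∀ r, W r a x ≤ 1
  | 0 => hx1
  | (r+1) => by
    have := ginv_le_half ha (W_pos ha hx r) (W_le_one ha hx hx1 r)
    simpa [W] using le_trans this (by norm_num)

lemma W_le_half {a x : ℝ} (ha : 0 < a) (hx : 0 < x) (hx1 : x ≤ 1) (r : ℕ) :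
    W (r+1) a x ≤ 1/2 :=
  ginv_le_half ha (W_pos ha hx r) (W_le_one ha hx hx1 r)

lemma Br_pos {a x : ℝ} (ha : 0 ≤ a) : ∀ r, 0 < Br a x r
  | 0 => one_pos
  | (r+1) => div_pos (Br_pos ha r) (phx_pos a _ ha)

lemma Z_eq_W (Z : ℕ → ℝ → ℝ → ℝ)
    (hZ0 : ∀ a ∈ Set.Ioo (0:ℝ) 1, ∀ x ∈ Set.Ioi (0:ℝ), Z 0 a x = x)
    (hZr : ∀ a ∈ Set.Ioo (0:ℝ) 1, ∀ r : ℕ, ∀ x ∈ Set.Ioi (0:ℝ),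
      Ea a (Z (r + 1) a x) = Z r a x ∧ 0 < Z (r + 1) a x) :
    ∀ r : ℕ, ∀ a ∈ Set.Ioo (0:ℝ) 1, ∀ x ∈ Set.Ioi (0:ℝ), Z r a x = W r a x := by
  intro r
  induction r with
  | zero => intro a ha x hx; rw [hZ0 a ha x hx]; rfl
  | succ r ih =>
    intro a ha x hx
    obtain ⟨hrec, hpos⟩ := hZr a ha r x hx
    have h1 : phi a (Z (r+1) a x) = W r a x := by
      rw [← phi_eq_Ea a _ hpos, hrec, ih a ha x hx]
    have : ginv a (phi a (Z (r+1) a x)) = Z (r+1) a x := ginv_eq ha.1 hpos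
    rw [h1] at this
    exact this.symm

/-- `uu α z k = (2 * z_k)^α` where `z_k = W k α z`. -/
noncomputable def uu (α z : ℝ) (k : ℕ) : ℝ := Real.exp (α * Real.log (2 * W k α z))

lemma uu_pos (α z : ℝ) (k : ℕ) : 0 < uu α z k := Real.exp_pos _

lemma W_succ_eq {α z : ℝ} (ha : 0 < α) (hz : 0 < z) (k : ℕ) :
    W k α z = W (k+1) α z * (1 + uu α z (k+1)) := by
  conv_lhs => rw [← phi_W ha hz k]
  rw [phi, uu]

lemma uu_le_one {α z : ℝ} (ha : α ∈ Ioo (0:ℝ) 1) (hz : 0 < z) (hz1 : z ≤ 1) (k : ℕ) :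
    uu α z (k+1) ≤ 1 := by
  rw [uu]
  apply Real.exp_le_one_iff.2
  have h2 : 2 * W (k+1) α z ≤ 1 := by linarith [W_le_half ha.1 hz hz1 k]
  have h0 : (0:ℝ) ≤ 2 * W (k+1) α z := by nlinarith [W_pos ha.1 hz (k+1)]
  have := Real.log_nonpos h0 h2
  nlinarith [ha.1]

lemma uu_rec {α z : ℝ} (ha : 0 < α) (hz : 0 < z) (k : ℕ) :
    uu α z k = uu α z (k+1) * Real.exp (α * Real.log (1 + uu α z (k+1))) := by
  have hW := W_pos ha hz (k+1)
  have hu := uu_pos α z (k+1)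
  rw [uu, W_succ_eq ha hz k]
  rw [show 2 * (W (k+1) α z * (1 + uu α z (k+1))) = (2 * W (k+1) α z) * (1 + uu α z (k+1)) by ring]
  rw [Real.log_mul (by positivity) (by positivity), mul_add, Real.exp_add, uu]

lemma vinv_step {α z : ℝ} (ha : α ∈ Ioo (0:ℝ) 1) (hz : 0 < z) (hz1 : z ≤ 1) (k : ℕ) :
    (uu α z k)⁻¹ + α/4 ≤ (uu α z (k+1))⁻¹ := by
  set u := uu α z k with hu
  set u' := uu α z (k+1) with hu'
  have hup : 0 < u := uu_pos α z k
  have hu'p : 0 < u' := uu_pos α z (k+1)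
  have hu'1 : u' ≤ 1 := uu_le_one ha hz hz1 k
  set E := Real.exp (α * Real.log (1 + u')) with hE
  have hrec : u = u' * E := uu_rec ha.1 hz k
  have hEp : 0 < E := Real.exp_pos _
  have hlog_lb : u'/(1+u') ≤ Real.log (1 + u') := by
    have h := Real.log_le_sub_one_of_pos (show (0:ℝ) < (1+u')⁻¹ by positivity)
    rw [Real.log_inv] at h
    have h2 : 1 - (1+u')⁻¹ = u'/(1+u') := by field_simp; ring
    rw [← h2]
    linarith
  have hE_lb : 1 + α * (u'/(1+u')) ≤ E := by
    have h1 := Real.add_one_le_exp (α * Real.log (1+u'))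
    nlinarith [ha.1]
  have hE_ub : E ≤ 2 := by
    have h1 : Real.log (1+u') ≤ Real.log 2 := Real.log_le_log (by positivity) (by linarith)
    have h2 : α * Real.log (1+u') ≤ Real.log 2 := by
      nlinarith [Real.log_nonneg (by linarith : (1:ℝ) ≤ 1 + u'), ha.2, ha.1,
        Real.log_nonneg (by norm_num : (1:ℝ) ≤ 2)]
    calc E ≤ Real.exp (Real.log 2) := Real.exp_le_exp.2 h2
    _ = 2 := Real.exp_log (by norm_num)
  have key : u'⁻¹ = E * u⁻¹ := by
    rw [hrec]; field_simp
  rw [key]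
  have h3 : α * (u'/(1+u')) ≥ α * (u'/2) := by
    apply mul_le_mul_of_nonneg_left _ ha.1.le
    apply div_le_div_of_nonneg_left hu'p.le (by linarith) (by linarith)
  have h4 : E - 1 ≥ α * u' / 2 := by nlinarith
  have h5 : u ≤ 2 * u' := by nlinarith
  have h6 : (E - 1) * u⁻¹ ≥ α / 4 := by
    rw [ge_iff_le, le_mul_inv_iff₀ hup]
    nlinarith [ha.1]
  nlinarith

lemma vinv_ge {α z : ℝ} (ha : α ∈ Ioo (0:ℝ) 1) (hz : 0 < z) (hz1 : z ≤ 1) :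
    ∀ k : ℕ, (uu α z 0)⁻¹ + k * (α/4) ≤ (uu α z k)⁻¹
  | 0 => by simp
  | (k+1) => by
    have h1 := vinv_ge ha hz hz1 k
    have h2 := vinv_step ha hz hz1 k
    push_cast
    nlinarith

lemma log_vinv_le {α z : ℝ} (ha : α ∈ Ioo (0:ℝ) 1) (hz : 0 < z) (hz1 : z ≤ 1) :
    ∀ k : ℕ, Real.log (uu α z k)⁻¹ ≤
      Real.log (uu α z 0)⁻¹ + α * ∑ j ∈ Finset.range k, uu α z (j+1)
  | 0 => by simp
  | (k+1) => by
    have ih := log_vinv_le ha hz hz1 k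
    have hu'p : 0 < uu α z (k+1) := uu_pos α z (k+1)
    have hup : 0 < uu α z k := uu_pos α z k
    have hrec : uu α z k = uu α z (k+1) * Real.exp (α * Real.log (1 + uu α z (k+1))) :=
      uu_rec ha.1 hz k
    have key : (uu α z (k+1))⁻¹ = Real.exp (α * Real.log (1 + uu α z (k+1))) * (uu α z k)⁻¹ := by
      rw [hrec]; field_simp
    have hlog : Real.log (uu α z (k+1))⁻¹ =
        α * Real.log (1 + uu α z (k+1)) + Real.log (uu α z k)⁻¹ := by
      rw [key, Real.log_mul (Real.exp_pos _).ne' (by positivity), Real.log_exp]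
    have hle : Real.log (1 + uu α z (k+1)) ≤ uu α z (k+1) := by
      have := Real.log_le_sub_one_of_pos (show (0:ℝ) < 1 + uu α z (k+1) by positivity)
      linarith
    rw [hlog, Finset.sum_range_succ]
    have := mul_le_mul_of_nonneg_left hle ha.1.le
    linarith

lemma S_bound {α z : ℝ} (ha : α ∈ Ioo (0:ℝ) 1) (hz : 0 < z) (hz1 : z ≤ 1) (r : ℕ) :
    ∑ k ∈ Finset.range r, uu α z (k+1) ≤ (4/α) * Real.log (1 + r * uu α z 0) := by
  set v0 := (uu α z 0)⁻¹ with hv0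
  have hv0p : 0 < v0 := by rw [hv0]; exact inv_pos.2 (uu_pos α z 0)
  set c := (4/α) * v0 with hc
  have hcp : 0 < c := by
    have := ha.1; rw [hc]; positivity
  have hterm : ∀ k : ℕ, uu α z (k+1) ≤ (4/α) * (Real.log (c + (k+1)) - Real.log (c + k)) := by
    intro k
    push_cast
    have h1 := vinv_ge ha hz hz1 (k+1)
    have h2 : (0:ℝ) < v0 + ((k:ℝ)+1) * (α/4) := by
      have := ha.1; positivity
    have h3 : uu α z (k+1) ≤ (v0 + ((k:ℝ)+1) * (α/4))⁻¹ := by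
      rw [← inv_inv (uu α z (k+1))]
      apply inv_anti₀ h2
      push_cast at h1 ⊢
      linarith
    have h4 : (v0 + ((k:ℝ)+1) * (α/4))⁻¹ = (4/α) * (c + ((k:ℝ)+1))⁻¹ := by
      have hα := ha.1
      rw [hc]
      field_simp
    have h5 : (c + ((k:ℝ)+1))⁻¹ ≤ Real.log (c + ((k:ℝ)+1)) - Real.log (c + (k:ℝ)) := by
      have hx : (0:ℝ) < c + (k:ℝ) := by positivity
      have hy : (0:ℝ) < c + ((k:ℝ)+1) := by positivity
      have h := Real.log_le_sub_one_of_pos (div_pos hx hy)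
      rw [Real.log_div hx.ne' hy.ne'] at h
      have h2 : (c+(k:ℝ))/(c+((k:ℝ)+1)) - 1 = -((c + ((k:ℝ)+1))⁻¹) := by field_simp; ring
      rw [h2] at h
      linarith
    calc uu α z (k+1) ≤ (v0 + ((k:ℝ)+1) * (α/4))⁻¹ := h3
      _ = (4/α) * (c + ((k:ℝ)+1))⁻¹ := h4
      _ ≤ (4/α) * (Real.log (c + ((k:ℝ)+1)) - Real.log (c + (k:ℝ))) := by
          apply mul_le_mul_of_nonneg_left h5
          have := ha.1; positivity
  calc ∑ k ∈ Finset.range r, uu α z (k+1)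
      ≤ ∑ k ∈ Finset.range r, (4/α) * (Real.log (c + (k+1)) - Real.log (c + k)) :=
        Finset.sum_le_sum fun k _ => hterm k
    _ = (4/α) * (Real.log (c + r) - Real.log (c + 0)) := by
        rw [← Finset.mul_sum]
        congr 1
        have := Finset.sum_range_sub (fun k : ℕ => Real.log (c + k)) r
        push_cast at this ⊢
        linarith [this]
    _ ≤ (4/α) * Real.log (1 + r * uu α z 0) := by
        apply mul_le_mul_of_nonneg_left _ (by have := ha.1; positivity)
        have hu0 : 0 < uu α z 0 := uu_pos α z 0
        have hlog : Real.log (c + r) - Real.log c = Real.log ((c + r)/c) := by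
          rw [Real.log_div (by positivity) hcp.ne']
        simp only [Nat.cast_zero, add_zero]
        rw [hlog]
        apply Real.log_le_log (by positivity)
        rw [div_le_iff₀ hcp]
        have h1 : c * ((α/4) * uu α z 0) = 1 := by
          rw [hc, hv0]
          have h0 : uu α z 0 ≠ 0 := (uu_pos α z 0).ne'
          have hα : α ≠ 0 := ha.1.ne'
          field_simp
        have h2 : uu α z 0 * c * α = 4 := by linear_combination 4 * h1
        have hru : (0:ℝ) ≤ (r:ℝ) := by positivity
        have h3 : 1 ≤ uu α z 0 * c := by nlinarith [ha.1, ha.2]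
        nlinarith [mul_le_mul_of_nonneg_left h3 hru]

lemma phx_W (α z : ℝ) (k : ℕ) : phx α (W (k+1) α z) = 1 + (1+α) * uu α z (k+1) := rfl

lemma pha_W (α z : ℝ) (k : ℕ) :
    pha α (W (k+1) α z) = W (k+1) α z * uu α z (k+1) * Real.log (2 * W (k+1) α z) := rfl

lemma logW_nonpos {α z : ℝ} (ha : α ∈ Ioo (0:ℝ) 1) (hz : 0 < z) (hz1 : z ≤ 1) (k : ℕ) :
    Real.log (2 * W (k+1) α z) ≤ 0 := by
  apply Real.log_nonpos
  · nlinarith [W_pos ha.1 hz (k+1)]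
  · nlinarith [W_le_half ha.1 hz hz1 k]

lemma Ar_bound {α z : ℝ} (ha : α ∈ Ioo (0:ℝ) 1) (hz : 0 < z) (hz1 : z ≤ 1) :
    ∀ k : ℕ, |Ar α z k| ≤ W k α z *
      ∑ j ∈ Finset.range k, uu α z (j+1) * (-Real.log (2 * W (j+1) α z))
  | 0 => by simp [Ar]
  | (k+1) => by
    have ih := Ar_bound ha hz hz1 k
    have hLpos : 0 ≤ -Real.log (2 * W (k+1) α z) := by linarith [logW_nonpos ha hz hz1 k]
    have hup : 0 < uu α z (k+1) := uu_pos α z (k+1)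
    have hWp : 0 < W (k+1) α z := W_pos ha.1 hz (k+1)
    have hWkp : 0 < W k α z := W_pos ha.1 hz k
    have hWk : W k α z = W (k+1) α z * (1 + uu α z (k+1)) := W_succ_eq ha.1 hz k
    have hphx : phx α (W (k+1) α z) = 1 + (1+α) * uu α z (k+1) := phx_W α z k
    have hphxge : 1 + uu α z (k+1) ≤ phx α (W (k+1) α z) := by
      rw [hphx]; nlinarith [ha.1]
    have hphxpos : 0 < phx α (W (k+1) α z) := phx_pos α _ ha.1.le
    have hpha : |pha α (W (k+1) α z)|
        = W (k+1) α z * uu α z (k+1) * (-Real.log (2 * W (k+1) α z)) := by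
      rw [pha_W]
      have hneg : W (k+1) α z * uu α z (k+1) * Real.log (2 * W (k+1) α z) ≤ 0 :=
        mul_nonpos_of_nonneg_of_nonpos (mul_nonneg hWp.le hup.le) (logW_nonpos ha hz hz1 k)
      rw [abs_of_nonpos hneg]
      ring
    have habs : |Ar α z (k+1)| ≤ (|Ar α z k| + W (k+1) α z * uu α z (k+1) *
        (-Real.log (2 * W (k+1) α z))) / (1 + uu α z (k+1)) := by
      show |(Ar α z k - pha α (W (k+1) α z)) / phx α (W (k+1) α z)| ≤ _
      rw [abs_div, abs_of_pos hphxpos]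
      apply div_le_div₀ (by positivity) _ (by linarith) hphxge
      calc |Ar α z k - pha α (W (k+1) α z)| ≤ |Ar α z k| + |pha α (W (k+1) α z)| :=
            abs_sub _ _
        _ = _ := by rw [hpha]
    have hsum_nonneg : (0:ℝ) ≤ ∑ j ∈ Finset.range k,
        uu α z (j+1) * (-Real.log (2 * W (j+1) α z)) := by
      apply Finset.sum_nonneg
      intro j _
      have h1 := uu_pos α z (j+1)
      have h2 := logW_nonpos ha hz hz1 j
      nlinarith
    rw [Finset.sum_range_succ]
    refine le_trans habs ?_
    rw [div_le_iff₀ (by linarith : (0:ℝ) < 1 + uu α z (k+1))]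
    have ih' : |Ar α z k| ≤ W (k+1) α z * (1 + uu α z (k+1)) *
        ∑ j ∈ Finset.range k, uu α z (j+1) * (-Real.log (2 * W (j+1) α z)) := by
      rw [← hWk]; exact ih
    nlinarith [mul_nonneg (mul_nonneg hWp.le hup.le) hLpos,
      mul_nonneg (mul_nonneg (mul_nonneg hWp.le hup.le) hup.le) hLpos]

lemma L_le {α z : ℝ} (ha : α ∈ Ioo (0:ℝ) 1) (hz : 0 < z) (hz1 : z ≤ 1) (k : ℕ) :
    -Real.log (2 * W k α z) ≤ -Real.log (2*z) + ∑ j ∈ Finset.range k, uu α z (j+1) := by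
  have h := log_vinv_le ha hz hz1 k
  rw [uu, uu, Real.log_inv, Real.log_inv, Real.log_exp, Real.log_exp] at h
  simp only [show W 0 α z = z from rfl] at h
  have h' : α * (-Real.log (2 * W k α z)) ≤
      α * (-Real.log (2*z) + ∑ j ∈ Finset.range k, uu α z (j+1)) := by
    ring_nf at h ⊢
    linarith
  exact le_of_mul_le_mul_left h' ha.1

lemma Br_hasDerivAt {α z : ℝ} (ha : α ∈ Ioo (0:ℝ) 1) (hz : 0 < z) (hz1 : z ≤ 1) :
    ∀ r : ℕ, ∃ T : ℝ, HasDerivAt (fun a => Br a z r) (Br α z r * T) α ∧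
      |T| ≤ ∑ k ∈ Finset.range r, uu α z (k+1) *
        (1 + 2 * (-Real.log (2 * W (k+1) α z)) + 2 * (|Ar α z (k+1)| / W (k+1) α z))
  | 0 => ⟨0, by simpa [Br] using hasDerivAt_const α (1:ℝ), by simp⟩
  | (r+1) => by
    obtain ⟨T, hT, hTb⟩ := Br_hasDerivAt ha hz hz1 r
    have hWp : 0 < W (r+1) α z := W_pos ha.1 hz (r+1)
    have hup : 0 < uu α z (r+1) := uu_pos α z (r+1)
    have hW' : HasDerivAt (fun a => W (r+1) a z) (Ar α z (r+1)) α :=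
      hasDerivAt_W_a ha hz (r+1)
    have hlog : HasDerivAt (fun a => Real.log (2 * W (r+1) a z))
        (2 * Ar α z (r+1) / (2 * W (r+1) α z)) α :=
      (hW'.const_mul 2).log (by positivity)
    have hmul : HasDerivAt (fun a => a * Real.log (2 * W (r+1) a z))
        (1 * Real.log (2 * W (r+1) α z) + α * (2 * Ar α z (r+1) / (2 * W (r+1) α z))) α :=
      (hasDerivAt_id α).mul hlog
    have hexp : HasDerivAt (fun a => Real.exp (a * Real.log (2 * W (r+1) a z)))
        (Real.exp (α * Real.log (2 * W (r+1) α z)) *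
          (1 * Real.log (2 * W (r+1) α z) + α * (2 * Ar α z (r+1) / (2 * W (r+1) α z)))) α :=
      hmul.exp
    have h1a : HasDerivAt (fun a : ℝ => 1 + a) 1 α := by
      simpa using (hasDerivAt_id α).const_add 1
    have hprod : HasDerivAt (fun a => (1 + a) * Real.exp (a * Real.log (2 * W (r+1) a z)))
        (1 * Real.exp (α * Real.log (2 * W (r+1) α z)) + (1 + α) *
          (Real.exp (α * Real.log (2 * W (r+1) α z)) *
            (1 * Real.log (2 * W (r+1) α z) + α * (2 * Ar α z (r+1) / (2 * W (r+1) α z))))) α :=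
      h1a.mul hexp
    set E' : ℝ := 1 * Real.exp (α * Real.log (2 * W (r+1) α z)) + (1 + α) *
          (Real.exp (α * Real.log (2 * W (r+1) α z)) *
            (1 * Real.log (2 * W (r+1) α z) + α * (2 * Ar α z (r+1) / (2 * W (r+1) α z)))) with hE'
    have hE : HasDerivAt (fun a => phx a (W (r+1) a z)) E' α := by
      have := hprod.const_add 1
      simpa [phx] using this
    have hEα : phx α (W (r+1) α z) = 1 + (1+α) * uu α z (r+1) := phx_W α z r
    have hEpos : 0 < phx α (W (r+1) α z) := phx_pos α _ ha.1.le
    have hEge1 : 1 ≤ phx α (W (r+1) α z) := by rw [hEα]; nlinarith [ha.1]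
    have hinv : HasDerivAt (fun a => (phx a (W (r+1) a z))⁻¹)
        (-E' / (phx α (W (r+1) α z))^2) α := hE.inv hEpos.ne'
    have hfull := hT.mul hinv
    have hfun : (fun a => Br a z r * (phx a (W (r+1) a z))⁻¹) = fun a => Br a z (r+1) := by
      funext a
      simp only [Br, div_eq_mul_inv]
    rw [show ((fun a => Br a z r) * fun a => (phx a (W (r+1) a z))⁻¹) = fun a => Br a z r * (phx a (W (r+1) a z))⁻¹ from rfl, hfun] at hfull
    have hBrpos : 0 < Br α z r := Br_pos ha.1.le r
    have hBrpos' : 0 < Br α z (r+1) := Br_pos ha.1.le (r+1)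
    have hBr1 : Br α z (r+1) = Br α z r / phx α (W (r+1) α z) := rfl
    refine ⟨T - E' / phx α (W (r+1) α z), ?_, ?_⟩
    · refine hfull.congr_deriv ?_
      rw [hBr1]
      field_simp
      ring
    · have habs : |T - E' / phx α (W (r+1) α z)| ≤ |T| + |E'| / phx α (W (r+1) α z) := by
        calc |T - E' / phx α (W (r+1) α z)| ≤ |T| + |E' / phx α (W (r+1) α z)| := abs_sub _ _
          _ = |T| + |E'| / phx α (W (r+1) α z) := by rw [abs_div, abs_of_pos hEpos]
      have hE'b : |E'| ≤ uu α z (r+1) *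
          (1 + 2 * (-Real.log (2 * W (r+1) α z)) + 2 * (|Ar α z (r+1)| / W (r+1) α z)) := by
        rw [hE']
        have huu : Real.exp (α * Real.log (2 * W (r+1) α z)) = uu α z (r+1) := rfl
        rw [huu]
        have hsimp : 2 * Ar α z (r+1) / (2 * W (r+1) α z) = Ar α z (r+1) / W (r+1) α z := by
          field_simp
        rw [hsimp]
        have hLneg := logW_nonpos ha hz hz1 r
        have habs2 : |1 * uu α z (r+1) + (1 + α) * (uu α z (r+1) *
            (1 * Real.log (2 * W (r+1) α z) + α * (Ar α z (r+1) / W (r+1) α z)))|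
            ≤ uu α z (r+1) * |1 + (1 + α) *
            (Real.log (2 * W (r+1) α z) + α * (Ar α z (r+1) / W (r+1) α z))| := by
          rw [show 1 * uu α z (r+1) + (1 + α) * (uu α z (r+1) *
            (1 * Real.log (2 * W (r+1) α z) + α * (Ar α z (r+1) / W (r+1) α z)))
            = uu α z (r+1) * (1 + (1 + α) *
            (Real.log (2 * W (r+1) α z) + α * (Ar α z (r+1) / W (r+1) α z))) by ring]
          rw [abs_mul, abs_of_pos hup]
        refine le_trans habs2 ?_
        apply mul_le_mul_of_nonneg_left _ hup.le
        have h5 : |Real.log (2 * W (r+1) α z) + α * (Ar α z (r+1) / W (r+1) α z)|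
            ≤ (-Real.log (2 * W (r+1) α z)) + |Ar α z (r+1)| / W (r+1) α z := by
          calc |Real.log (2 * W (r+1) α z) + α * (Ar α z (r+1) / W (r+1) α z)|
              ≤ |Real.log (2 * W (r+1) α z)| + |α * (Ar α z (r+1) / W (r+1) α z)| := abs_add_le _ _
            _ ≤ (-Real.log (2 * W (r+1) α z)) + |Ar α z (r+1)| / W (r+1) α z := by
                rw [abs_of_nonpos hLneg, abs_mul, abs_div, abs_of_pos hWp,
                  abs_of_pos ha.1]
                have : α * (|Ar α z (r+1)| / W (r+1) α z) ≤ 1 * (|Ar α z (r+1)| / W (r+1) α z) := by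
                  apply mul_le_mul_of_nonneg_right ha.2.le (by positivity)
                linarith
        calc |1 + (1 + α) * (Real.log (2 * W (r+1) α z) + α * (Ar α z (r+1) / W (r+1) α z))|
            ≤ 1 + (1 + α) * |Real.log (2 * W (r+1) α z) + α * (Ar α z (r+1) / W (r+1) α z)| := by
              refine le_trans (abs_add_le _ _) ?_
              rw [abs_one, abs_mul, abs_of_pos (by linarith [ha.1] : (0:ℝ) < 1 + α)]
          _ ≤ 1 + 2 * (-Real.log (2 * W (r+1) α z)) + 2 * (|Ar α z (r+1)| / W (r+1) α z) := by
              have h6 : (1 + α) * |Real.log (2 * W (r+1) α z) + α * (Ar α z (r+1) / W (r+1) α z)|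
                  ≤ 2 * ((-Real.log (2 * W (r+1) α z)) + |Ar α z (r+1)| / W (r+1) α z) := by
                have hnn : 0 ≤ (-Real.log (2 * W (r+1) α z)) + |Ar α z (r+1)| / W (r+1) α z := by
                  have : (0:ℝ) ≤ |Ar α z (r+1)| / W (r+1) α z := by positivity
                  linarith
                nlinarith [abs_nonneg (Real.log (2 * W (r+1) α z) + α * (Ar α z (r+1) / W (r+1) α z)), ha.2, ha.1, h5]
              linarith
      have hdiv : |E'| / phx α (W (r+1) α z) ≤ |E'| := by
        rw [div_le_iff₀ hEpos]
        nlinarith [abs_nonneg E']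
      rw [Finset.sum_range_succ]
      linarith [le_trans hdiv hE'b]

lemma log_aux {x : ℝ} (hx : 0 < x) : Real.log (1 + 2*x) ≤ 3 * max 1 (Real.log x) := by
  have hmax : (1:ℝ) ≤ max 1 (Real.log x) := le_max_left _ _
  rcases le_or_gt x 1 with h | h
  · have h1 : Real.log (1 + 2*x) ≤ Real.log 3 := Real.log_le_log (by linarith) (by linarith)
    have h2 : Real.log 3 ≤ 3 := by
      have := Real.log_le_sub_one_of_pos (by norm_num : (0:ℝ) < 3)
      linarith
    linarith
  · have h1 : Real.log (1 + 2*x) ≤ Real.log (3*x) := Real.log_le_log (by linarith) (by linarith)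
    rw [Real.log_mul (by norm_num) hx.ne'] at h1
    have h2 : Real.log 3 ≤ 2 := by
      have := Real.log_le_sub_one_of_pos (by norm_num : (0:ℝ) < 3)
      linarith
    have h3 : Real.log x ≤ max 1 (Real.log x) := le_max_right _ _
    linarith

lemma uu_zero_le {α z : ℝ} (ha : α ∈ Ioo (0:ℝ) 1) (hz : 0 < z) :
    uu α z 0 ≤ 2 * z ^ α := by
  have : uu α z 0 = Real.exp (Real.log 2 * α) * Real.exp (Real.log z * α) := by
    rw [uu, show W 0 α z = z from rfl, Real.log_mul (by norm_num) hz.ne', mul_add, Real.exp_add,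
      mul_comm α (Real.log 2), mul_comm α (Real.log z)]
  rw [this, ← Real.rpow_def_of_pos (by norm_num : (0:ℝ) < 2), ← Real.rpow_def_of_pos hz]
  have h2 : (2:ℝ) ^ α ≤ 2 := by
    calc (2:ℝ) ^ α ≤ (2:ℝ) ^ (1:ℝ) :=
      Real.rpow_le_rpow_of_exponent_le (by norm_num) ha.2.le
    _ = 2 := Real.rpow_one 2
  have h3 : (0:ℝ) < z ^ α := Real.rpow_pos_of_pos hz α
  nlinarith

lemma final_arith {c1 M Λ S P : ℝ} (hc1 : 0 < c1) (hM : 1 ≤ M) (hΛ : 1 ≤ Λ) (hMΛ : M ≤ Λ)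
    (hS0 : 0 ≤ S) (hP0 : 0 ≤ P) (hS : S ≤ c1*M) (hP : P ≤ Λ + c1*M) :
    S + 2*P*S + 2*P*S^2 ≤ (3*c1 + 4*c1^2 + 2*c1^3 + 1) * M^2 * Λ := by
  have hM0 : (0:ℝ) < M := by linarith
  have hΛ0 : (0:ℝ) < Λ := by linarith
  have e1 : P*S ≤ (Λ + c1*M)*(c1*M) := by
    apply mul_le_mul hP hS hS0 (by positivity)
  have eS2 : S^2 ≤ (c1*M)^2 := by nlinarith
  have e2 : P*S^2 ≤ (Λ + c1*M)*(c1*M)^2 := by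
    apply mul_le_mul hP eS2 (by positivity) (by positivity)
  have hMM : 1 ≤ M*Λ := by nlinarith
  have h1 : M ≤ M^2*Λ := by nlinarith [mul_le_mul_of_nonneg_left hMM hM0.le]
  have h2 : M*Λ ≤ M^2*Λ := by nlinarith [mul_nonneg (mul_nonneg hM0.le hΛ0.le) (by linarith : (0:ℝ) ≤ M - 1)]
  have h3 : M^2 ≤ M^2*Λ := by nlinarith [mul_nonneg (sq_nonneg M) (by linarith : (0:ℝ) ≤ Λ - 1)]
  have h4 : M^3 ≤ M^2*Λ := by nlinarith [mul_nonneg (sq_nonneg M) (by linarith : (0:ℝ) ≤ Λ - M)]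
  have expand : (Λ + c1*M)*(c1*M) = c1*(M*Λ) + c1^2*M^2 := by ring
  have expand2 : (Λ + c1*M)*(c1*M)^2 = c1^2*(M^2*Λ) + c1^3*M^3 := by ring
  have t1 : c1*M ≤ c1*(M^2*Λ) := mul_le_mul_of_nonneg_left h1 hc1.le
  have t2 : c1*(M*Λ) ≤ c1*(M^2*Λ) := mul_le_mul_of_nonneg_left h2 hc1.le
  have t3 : c1^2*M^2 ≤ c1^2*(M^2*Λ) := mul_le_mul_of_nonneg_left h3 (by positivity)
  have t4 : c1^3*M^3 ≤ c1^3*(M^2*Λ) := mul_le_mul_of_nonneg_left h4 (by positivity)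
  nlinarith [e1, e2, t1, t2, t3, t4]

theorem stmt13 (αm αp : ℝ) (h1 : 0 < αm) (h2 : αm ≤ αp) (h3 : αp < 1) :
    ∃ C : ℝ, 0 < C ∧
      ∀ Z : ℕ → ℝ → ℝ → ℝ,
        (∀ a ∈ Set.Ioo (0:ℝ) 1, ∀ x ∈ Set.Ioi (0:ℝ), Z 0 a x = x) →
        (∀ a ∈ Set.Ioo (0:ℝ) 1, ∀ r : ℕ, ∀ x ∈ Set.Ioi (0:ℝ),
          Ea a (Z (r + 1) a x) = Z r a x ∧ 0 < Z (r + 1) a x) →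
        (∀ a ∈ Set.Ioo (0:ℝ) 1, ∀ r : ℕ, ∀ x ∈ Set.Ioc (0:ℝ) 1, Z (r + 1) a x ≤ 1/2) →
        ∀ α ∈ Set.Icc αm αp, ∀ z ∈ Set.Ioc (0:ℝ) 1, ∀ r : ℕ, 1 ≤ r →
          |deriv (fun a => deriv (fun x => Z r a x) z) α / deriv (fun x => Z r α x) z| ≤
            C * (max 1 (Real.log (r * z ^ α))) ^ 2 * (max 1 (Real.log r) - Real.log z) := by
  set c1 : ℝ := 12 / αm with hc1def
  have hc1 : 0 < c1 := by positivity
  refine ⟨3*c1 + 4*c1^2 + 2*c1^3 + 1, by positivity, ?_⟩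
  intro Z hZ0 hZrec _hZhalf α hα z hz r hr
  have hαIoo : α ∈ Ioo (0:ℝ) 1 := ⟨lt_of_lt_of_le h1 hα.1, lt_of_le_of_lt hα.2 h3⟩
  have hzpos : 0 < z := hz.1
  have hz1 : z ≤ 1 := hz.2
  set M : ℝ := max 1 (Real.log (r * z ^ α)) with hMdef
  set Λ : ℝ := max 1 (Real.log r) - Real.log z with hΛdef
  have hrR : (1:ℝ) ≤ (r:ℝ) := by exact_mod_cast hr
  have hzα : 0 < z ^ α := Real.rpow_pos_of_pos hzpos α
  have hx0 : 0 < (r:ℝ) * z ^ α := by positivity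
  have hlogz : Real.log z ≤ 0 := Real.log_nonpos hzpos.le hz1
  have hM1 : 1 ≤ M := le_max_left _ _
  have hΛ1 : 1 ≤ Λ := by
    have := le_max_left (1:ℝ) (Real.log r)
    rw [hΛdef]; linarith
  have hMΛ : M ≤ Λ := by
    rw [hMdef, hΛdef]
    apply max_le
    · linarith [le_max_left (1:ℝ) (Real.log r)]
    · have hle : Real.log ((r:ℝ) * z ^ α) ≤ Real.log r := by
        rw [Real.log_mul (by positivity) hzα.ne', Real.log_rpow hzpos]
        nlinarith [hαIoo.1]
      linarith [le_max_right (1:ℝ) (Real.log r)]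
  -- identification of derivatives
  have hB : ∀ a ∈ Ioo (0:ℝ) 1, deriv (fun x => Z r a x) z = Br a z r := by
    intro a ha
    have hev : (fun x => Z r a x) =ᶠ[𝓝 z] (fun x => W r a x) := by
      filter_upwards [Ioi_mem_nhds hzpos] with x hx
      exact Z_eq_W Z hZ0 hZrec r a ha x hx
    rw [hev.deriv_eq, (hasDerivAt_W_x ha hzpos r).deriv]
  obtain ⟨T, hT, hTb⟩ := Br_hasDerivAt hαIoo hzpos hz1 r
  have hden : deriv (fun x => Z r α x) z = Br α z r := hB α hαIoo
  have hnum : deriv (fun a => deriv (fun x => Z r a x) z) α = Br α z r * T := by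
    have hev2 : (fun a => deriv (fun x => Z r a x) z) =ᶠ[𝓝 α] (fun a => Br a z r) := by
      filter_upwards [Ioo_mem_nhds hαIoo.1 hαIoo.2] with a ha
      exact hB a ha
    rw [hev2.deriv_eq, hT.deriv]
  have hBrpos : 0 < Br α z r := Br_pos hαIoo.1.le r
  rw [hnum, hden, mul_comm, mul_div_assoc, div_self hBrpos.ne', mul_one]
  -- trajectory bounds
  set S : ℝ := ∑ k ∈ Finset.range r, uu α z (k+1) with hSdef
  set Sig : ℝ := ∑ k ∈ Finset.range r, uu α z (k+1) * (-Real.log (2 * W (k+1) α z)) with hSigdef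
  set P : ℝ := -Real.log (2*z) + S with hPdef
  have hS0 : 0 ≤ S := Finset.sum_nonneg fun k _ => (uu_pos α z (k+1)).le
  have hterm_nonneg : ∀ k : ℕ, 0 ≤ uu α z (k+1) * (-Real.log (2 * W (k+1) α z)) := by
    intro k
    apply mul_nonneg (uu_pos α z (k+1)).le
    linarith [logW_nonpos hαIoo hzpos hz1 k]
  have hSig0 : 0 ≤ Sig := Finset.sum_nonneg fun k _ => hterm_nonneg k
  -- S ≤ c1 * M
  have hS_le : S ≤ c1 * M := by
    have h4 := S_bound hαIoo hzpos hz1 r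
    have hru : (r:ℝ) * uu α z 0 ≤ 2 * ((r:ℝ) * z ^ α) := by
      have := uu_zero_le hαIoo hzpos
      nlinarith [uu_pos α z 0]
    have hlog1 : Real.log (1 + (r:ℝ) * uu α z 0) ≤ Real.log (1 + 2 * ((r:ℝ) * z ^ α)) := by
      apply Real.log_le_log (by nlinarith [uu_pos α z 0, hrR]) (by linarith)
    have hlog2 := log_aux hx0
    have hα4 : 4/α ≤ 4/αm := by
      apply div_le_div_of_nonneg_left (by norm_num) h1
      exact hα.1
    have hlogpos : 0 ≤ Real.log (1 + (r:ℝ) * uu α z 0) := by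
      apply Real.log_nonneg
      nlinarith [uu_pos α z 0]
    have h5 : (4/α) * Real.log (1 + (r:ℝ) * uu α z 0) ≤ (4/αm) * (3 * M) := by
      apply mul_le_mul hα4 (by linarith) hlogpos (by positivity)
    rw [hSdef, hc1def]
    calc (∑ k ∈ Finset.range r, uu α z (k+1)) ≤ (4/α) * Real.log (1 + (r:ℝ) * uu α z 0) := h4
      _ ≤ (4/αm) * (3 * M) := h5
      _ = 12/αm * M := by ring
  -- L bounds
  have hLP : ∀ k, k < r → -Real.log (2 * W (k+1) α z) ≤ P := by
    intro k hk
    have h6 := L_le hαIoo hzpos hz1 (k+1)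
    have h7 : ∑ j ∈ Finset.range (k+1), uu α z (j+1) ≤ S := by
      apply Finset.sum_le_sum_of_subset_of_nonneg
      · exact Finset.range_subset_range.2 hk
      · intro j _ _; exact (uu_pos α z (j+1)).le
    rw [hPdef]; linarith
  have hP0 : 0 ≤ P := by
    have := hLP 0 hr
    linarith [logW_nonpos hαIoo hzpos hz1 0]
  have hP_le : P ≤ Λ + c1 * M := by
    have hlog2z : -Real.log (2*z) ≤ -Real.log z := by
      rw [Real.log_mul (by norm_num) hzpos.ne']
      have := Real.log_pos (by norm_num : (1:ℝ) < 2)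
      linarith
    have hmlz : -Real.log z ≤ Λ := by
      rw [hΛdef]
      linarith [le_max_left (1:ℝ) (Real.log r)]
    rw [hPdef]
    linarith
  -- Ar bounds
  have hArS : ∀ k, k < r → |Ar α z (k+1)| / W (k+1) α z ≤ Sig := by
    intro k hk
    have h8 := Ar_bound hαIoo hzpos hz1 (k+1)
    have hWp : 0 < W (k+1) α z := W_pos hαIoo.1 hzpos (k+1)
    rw [div_le_iff₀ hWp]
    have h9 : ∑ j ∈ Finset.range (k+1), uu α z (j+1) * (-Real.log (2 * W (j+1) α z)) ≤ Sig := by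
      apply Finset.sum_le_sum_of_subset_of_nonneg
      · exact Finset.range_subset_range.2 hk
      · intro j _ _; exact hterm_nonneg j
    calc |Ar α z (k+1)| ≤ W (k+1) α z *
          ∑ j ∈ Finset.range (k+1), uu α z (j+1) * (-Real.log (2 * W (j+1) α z)) := h8
      _ ≤ Sig * W (k+1) α z := by
          rw [mul_comm]
          apply mul_le_mul_of_nonneg_right h9 hWp.le
  -- Sig ≤ P * S
  have hSigPS : Sig ≤ P * S := by
    rw [hSigdef]
    calc ∑ k ∈ Finset.range r, uu α z (k+1) * (-Real.log (2 * W (k+1) α z))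
        ≤ ∑ k ∈ Finset.range r, uu α z (k+1) * P := by
          apply Finset.sum_le_sum
          intro k hk
          exact mul_le_mul_of_nonneg_left (hLP k (Finset.mem_range.1 hk)) (uu_pos α z (k+1)).le
      _ = S * P := by rw [hSdef, ← Finset.sum_mul]
      _ = P * S := mul_comm _ _
  -- |T| ≤ S * (1 + 2P + 2Sig)
  have hTS : |T| ≤ S * (1 + 2*P + 2*Sig) := by
    calc |T| ≤ ∑ k ∈ Finset.range r, uu α z (k+1) *
          (1 + 2 * (-Real.log (2 * W (k+1) α z)) + 2 * (|Ar α z (k+1)| / W (k+1) α z)) := hTb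
      _ ≤ ∑ k ∈ Finset.range r, uu α z (k+1) * (1 + 2*P + 2*Sig) := by
          apply Finset.sum_le_sum
          intro k hk
          apply mul_le_mul_of_nonneg_left _ (uu_pos α z (k+1)).le
          have := hLP k (Finset.mem_range.1 hk)
          have := hArS k (Finset.mem_range.1 hk)
          linarith
      _ = S * (1 + 2*P + 2*Sig) := by rw [hSdef, ← Finset.sum_mul]
  have hfinal : |T| ≤ S + 2*P*S + 2*P*S^2 := by
    have h10 : S * (2*Sig) ≤ S * (2*(P*S)) := by
      apply mul_le_mul_of_nonneg_left (by linarith) hS0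
    calc |T| ≤ S * (1 + 2*P + 2*Sig) := hTS
      _ = S + 2*P*S + S*(2*Sig) := by ring
      _ ≤ S + 2*P*S + S*(2*(P*S)) := by linarith
      _ = S + 2*P*S + 2*P*S^2 := by ring
  calc |T| ≤ S + 2*P*S + 2*P*S^2 := hfinal
    _ ≤ (3*c1 + 4*c1^2 + 2*c1^3 + 1) * M^2 * Λ :=
        final_arith hc1 hM1 hΛ1 hMΛ hS0 hP0 hS_le hP_le
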